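/- The n-qubit Ising loop Hamiltonian H_3 = -∑_{i=1}^{n-1} Z_i Z_{i+1} - Z_n Z_1 is unitarily equivalent, via a product of CNOT gates, to the parity-check Hamiltonian H_4 = -∑_{i=1}^{n-1} Z_i - ∏_{i=1}^{n-1} Z_i. -/

import Mathlib

open Matrix

noncomputable section

/-- The CNOT gate on an `n`-qubit register, with control `c` and target `t`,
as the permutation matrix of `x ↦ x` with the target bit replaced by `x t + x c`. -/
def CNOT (n : ℕ) (c t : Fin n) :
    Matrix (Fin n → Fin 2) (Fin n → Fin 2) ℂ :=
  Matrix.of fun x y => if x = Function.update y t (y t + y c) then 1 else 0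

/-- The Z-type Pauli operator `∏_{i ∈ s} Z_i` on an `n`-qubit register. -/
def ZPauli (n : ℕ) (s : Finset (Fin n)) :
    Matrix (Fin n → Fin 2) (Fin n → Fin 2) ℂ :=
  Matrix.diagonal fun x => (-1 : ℂ) ^ (∑ i ∈ s, (x i : ℕ))

/-- The X-type Pauli operator `∏_{i ∈ s} X_i` on an `n`-qubit register. -/
def XPauli (n : ℕ) (s : Finset (Fin n)) :
    Matrix (Fin n → Fin 2) (Fin n → Fin 2) ℂ :=
  Matrix.of fun x y => if (∀ i, x i = y i + if i ∈ s then 1 else 0) then 1 else 0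

/-- `U` is a product of CNOT gates. -/
def IsCNOTProduct (n : ℕ) (U : Matrix (Fin n → Fin 2) (Fin n → Fin 2) ℂ) : Prop :=
  ∃ l : List (Fin n × Fin n), (∀ p ∈ l, p.1 ≠ p.2) ∧
    U = (l.map fun p => CNOT n p.1 p.2).prod

/-! ### Auxiliary material -/

open Fin.NatCast

/-- The permutation-type matrix of a map on bit strings. -/
def permMat (n : ℕ) (f : (Fin n → Fin 2) → (Fin n → Fin 2)) :
    Matrix (Fin n → Fin 2) (Fin n → Fin 2) ℂ :=
  Matrix.of fun x y => if x = f y then 1 else 0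

lemma permMat_mul (n : ℕ) (f g : (Fin n → Fin 2) → (Fin n → Fin 2)) :
    permMat n f * permMat n g = permMat n (f ∘ g) := by
  ext x y
  simp only [permMat, mul_apply, of_apply, Function.comp_apply, ite_mul, one_mul, zero_mul]
  rw [Finset.sum_eq_single (g y)]
  · simp
  · intro b _ hb; simp [hb]
  · simp

lemma permMat_id (n : ℕ) : permMat n id = 1 := by
  ext x y
  simp [permMat, Matrix.one_apply]

lemma permMat_mul_diagonal_mul (n : ℕ) (f g : (Fin n → Fin 2) → (Fin n → Fin 2))
    (hfg : ∀ x, f (g x) = x) (d : (Fin n → Fin 2) → ℂ) :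
    permMat n f * Matrix.diagonal d * permMat n g = Matrix.diagonal (fun x => d (g x)) := by
  ext x y
  simp only [mul_apply, permMat, of_apply, diagonal_apply]
  rw [Finset.sum_eq_single (g y)]
  · rw [Finset.sum_eq_single (g y)]
    · by_cases h : x = y
      · subst h; simp [hfg]
      · have : x ≠ f (g y) := by rw [hfg]; exact h
        simp [this, h]
    · intro b _ hb; simp [hb]
    · simp
  · intro b _ hb; simp [hb]
  · simp

/-- partial difference map: add the next bit to bit `k`, for `k < m`. -/
def sig (n m : ℕ) (y : Fin (n+2) → Fin 2) : Fin (n+2) → Fin 2 :=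
  fun k => if (k : ℕ) < m then y k + y (k+1) else y k

/-- suffix-sum map, inverse to `sig n (n+1)`. -/
def gsum (n : ℕ) (x : Fin (n+2) → Fin 2) : Fin (n+2) → Fin 2 :=
  fun k => ∑ j : Fin (n+2), if k ≤ j then x j else 0

lemma fin2_add_self (a : Fin 2) : a + a = 0 := by revert a; decide

lemma fin2_val_add (u v : Fin 2) : ((u : ℕ) + (v : ℕ)) % 2 = ((u + v : Fin 2) : ℕ) := by
  revert u v; decide

lemma val_add_one {n : ℕ} (k : Fin (n+2)) (hk : (k : ℕ) < n+1) :
    ((k + 1 : Fin (n+2)) : ℕ) = (k : ℕ) + 1 := by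
  have h1 : (1 : Fin (n+2)).val = 1 := by simp
  rw [Fin.val_add, h1, Nat.mod_eq_of_lt (by omega)]

lemma val_natCast {n : ℕ} (j : ℕ) (hj : j < n+2) : (((j : Fin (n+2))) : ℕ) = j := by
  simp [Fin.val_natCast, Nat.mod_eq_of_lt hj]

lemma gsum_step {n : ℕ} (x : Fin (n+2) → Fin 2) (k : Fin (n+2)) (hk : (k : ℕ) < n+1) :
    gsum n x k = x k + gsum n x (k+1) := by
  have hk1 := val_add_one k hk
  have key : ∀ j, (if k ≤ j then x j else 0)
      = (if j = k then x j else 0) + (if k+1 ≤ j then x j else 0) := by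
    intro j
    by_cases hj : j = k
    · have h1 : ¬ (k + 1 ≤ k) := by rw [Fin.le_def, hk1]; omega
      simp [hj, h1]
    · have hvj : (j : ℕ) ≠ (k : ℕ) := fun hh => hj (Fin.ext hh)
      have : (k ≤ j) ↔ (k+1 ≤ j) := by
        rw [Fin.le_def, Fin.le_def, hk1]; omega
      simp [hj, this]
  unfold gsum
  rw [Finset.sum_congr rfl (fun j _ => key j), Finset.sum_add_distrib]
  congr 1
  simp

lemma gsum_last {n : ℕ} (x : Fin (n+2) → Fin 2) :
    gsum n x (Fin.last (n+1)) = x (Fin.last (n+1)) := by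
  unfold gsum
  rw [Finset.sum_eq_single (Fin.last (n+1))]
  · simp
  · intro j _ hj
    have : ¬ (Fin.last (n+1) ≤ j) := by
      rw [Fin.le_def]
      have := j.isLt
      simp only [Fin.val_last]
      intro h
      exact hj (Fin.ext (by simp only [Fin.val_last]; omega))
    simp [this]
  · simp

lemma gsum_zero {n : ℕ} (x : Fin (n+2) → Fin 2) :
    gsum n x 0 = ∑ j, x j := by
  unfold gsum
  simp [Fin.zero_le]

lemma sig_gsum {n : ℕ} (x : Fin (n+2) → Fin 2) : sig n (n+1) (gsum n x) = x := by
  funext k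
  unfold sig
  by_cases hk : (k : ℕ) < n+1
  · rw [if_pos hk, gsum_step x k hk, add_assoc, fin2_add_self, add_zero]
  · have : k = Fin.last (n+1) := Fin.ext (by have := k.isLt; simp [Fin.last]; omega)
    rw [if_neg hk, this, gsum_last]

lemma cnot_sig_step {n m : ℕ} (hm : m < n+1) :
    (fun y => Function.update y ((m : Fin (n+2))) (y (m : Fin (n+2)) + y ((m+1 : ℕ) : Fin (n+2))))
      ∘ sig n m = sig n (m+1) := by
  funext y k
  have hmv : (((m : ℕ) : Fin (n+2)) : ℕ) = m := val_natCast m (by omega)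
  have hm1v : (((m+1 : ℕ) : Fin (n+2)) : ℕ) = m+1 := val_natCast (m+1) (by omega)
  have hnotm : ¬ ((((m : ℕ) : Fin (n+2)) : ℕ) < m) := by omega
  have hnotm1 : ¬ ((((m+1 : ℕ) : Fin (n+2)) : ℕ) < m) := by omega
  simp only [Function.comp_apply]
  by_cases hk : k = (m : Fin (n+2))
  · subst hk
    rw [Function.update_self]
    have hlt : ((m : Fin (n+2)) : ℕ) < m + 1 := by omega
    have hsucc : ((m : Fin (n+2)) + 1) = ((m+1 : ℕ) : Fin (n+2)) := by
      apply Fin.ext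
      rw [val_add_one _ (by omega), hmv, hm1v]
    simp only [sig, hnotm, hnotm1, if_neg, if_pos hlt, hsucc, if_false]
  · rw [Function.update_of_ne hk]
    have hkv : (k : ℕ) ≠ m := fun h => hk (Fin.ext (by rw [h, hmv]))
    simp only [sig]
    by_cases h2 : (k : ℕ) < m
    · rw [if_pos h2, if_pos (by omega)]
    · rw [if_neg h2, if_neg (by omega)]

lemma prod_upto (n : ℕ) : ∀ m, m ≤ n+1 →
    (((List.range m).map fun j =>
        CNOT (n+2) ((j+1 : ℕ) : Fin (n+2)) ((j : ℕ) : Fin (n+2))).reverse).prod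
      = permMat (n+2) (sig n m) := by
  intro m
  induction m with
  | zero =>
    intro _
    simp only [List.range_zero, List.map_nil, List.reverse_nil, List.prod_nil]
    have h0 : sig n 0 = id := by funext y k; simp [sig]
    rw [h0, permMat_id]
  | succ m ih =>
    intro hm
    rw [List.range_succ, List.map_append, List.reverse_append]
    simp only [List.map_cons, List.map_nil, List.reverse_cons, List.reverse_nil,
      List.nil_append, List.singleton_append, List.prod_cons]
    rw [ih (by omega)]
    have : CNOT (n+2) ((m+1 : ℕ) : Fin (n+2)) ((m : ℕ) : Fin (n+2))
        = permMat (n+2) (fun y => Function.update y ((m : Fin (n+2)))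
            (y (m : Fin (n+2)) + y ((m+1 : ℕ) : Fin (n+2)))) := rfl
    rw [this, permMat_mul, cnot_sig_step (by omega)]

lemma parity_pow {a b : ℕ} (h : a % 2 = b % 2) : ((-1:ℂ))^a = (-1)^b := by
  conv_lhs => rw [← Nat.div_add_mod a 2]
  conv_rhs => rw [← Nat.div_add_mod b 2]
  rw [h, pow_add, pow_add, pow_mul, pow_mul, neg_one_sq, one_pow, one_pow]

lemma sum_val_parity {ι : Type*} [DecidableEq ι] (s : Finset ι) (v : ι → Fin 2) :
    (∑ i ∈ s, ((v i : ℕ))) % 2 = ((∑ i ∈ s, v i : Fin 2) : ℕ) := by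
  induction s using Finset.induction_on with
  | empty => simp
  | insert a s h ih =>
    rw [Finset.sum_insert h, Finset.sum_insert h, ← fin2_val_add, ← ih]
    omega

/-- On an `(n+2)`-qubit register, the Ising loop
`H₃ = -∑_{i=1}^{n+1} Z_i Z_{i+1} - Z_{n+2} Z_1` is unitarily equivalent, via a product of
CNOT gates, to the parity-check Hamiltonian `H₄ = -∑_{i=1}^{n+1} Z_i - ∏_{i=1}^{n+1} Z_i`
(whose product term acts trivially on the last qubit). -/
theorem stmt10 (n : ℕ) :
    ∃ U : Matrix (Fin (n + 2) → Fin 2) (Fin (n + 2) → Fin 2) ℂ,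
      IsCNOTProduct (n + 2) U ∧
      U * (-(∑ i : Fin (n + 1), ZPauli (n + 2) {i.castSucc, i.succ})
            - ZPauli (n + 2) {Fin.last (n + 1), 0}) * U⁻¹
        = -(∑ i : Fin (n + 1), ZPauli (n + 2) {i.castSucc})
            - ZPauli (n + 2) ({Fin.last (n + 1)}ᶜ) := by
  refine ⟨permMat (n+2) (sig n (n+1)), ?_, ?_⟩
  · refine ⟨((List.range (n+1)).map fun j =>
        (((j+1 : ℕ) : Fin (n+2)), ((j : ℕ) : Fin (n+2)))).reverse, ?_, ?_⟩
    · intro p hp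
      simp only [List.mem_reverse, List.mem_map, List.mem_range] at hp
      obtain ⟨j, hj, rfl⟩ := hp
      simp only [ne_eq]
      intro h
      have h1 : (((j+1 : ℕ) : Fin (n+2)) : ℕ) = j+1 := val_natCast _ (by omega)
      have h2 : (((j : ℕ) : Fin (n+2)) : ℕ) = j := val_natCast _ (by omega)
      rw [h, h2] at h1
      omega
    · rw [← prod_upto n (n+1) le_rfl, List.map_reverse, List.map_map]
      rfl
  · have hUinv : (permMat (n+2) (sig n (n+1)))⁻¹ = permMat (n+2) (gsum n) := by
      apply Matrix.inv_eq_right_inv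
      rw [permMat_mul]
      have : (sig n (n+1)) ∘ (gsum n) = id := funext sig_gsum
      rw [this, permMat_id]
    rw [hUinv]
    have hterm : ∀ s s' : Finset (Fin (n+2)),
        (∀ x, (∑ i ∈ s, ((gsum n x i : ℕ))) % 2 = (∑ i ∈ s', ((x i : ℕ))) % 2) →
        permMat (n+2) (sig n (n+1)) * ZPauli (n+2) s * permMat (n+2) (gsum n)
          = ZPauli (n+2) s' := by
      intro s s' h
      rw [ZPauli, permMat_mul_diagonal_mul _ _ _ sig_gsum]
      unfold ZPauli
      exact congrArg Matrix.diagonal (funext fun x => parity_pow (h x))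
    have expand : permMat (n+2) (sig n (n+1))
          * (-(∑ i : Fin (n + 1), ZPauli (n + 2) {i.castSucc, i.succ})
            - ZPauli (n + 2) {Fin.last (n + 1), 0}) * permMat (n+2) (gsum n)
        = -(∑ i : Fin (n + 1), permMat (n+2) (sig n (n+1))
              * ZPauli (n + 2) {i.castSucc, i.succ} * permMat (n+2) (gsum n))
          - permMat (n+2) (sig n (n+1)) * ZPauli (n + 2) {Fin.last (n + 1), 0}
              * permMat (n+2) (gsum n) := by
      simp only [mul_sub, sub_mul, mul_neg, neg_mul, Finset.mul_sum, Finset.sum_mul]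
    rw [expand]
    congr 1
    · congr 1
      refine Finset.sum_congr rfl fun i _ => hterm _ _ fun x => ?_
      -- parity for the bulk terms
      have hne : i.castSucc ≠ i.succ := (Fin.castSucc_lt_succ (i := i)).ne
      have hc : ((i.castSucc : Fin (n+2)) : ℕ) < n+1 := by
        simp only [Fin.coe_castSucc]; exact i.isLt
      have hsucc : (i.castSucc : Fin (n+2)) + 1 = i.succ := by
        apply Fin.ext
        rw [val_add_one _ hc]
        simp
      have hfin : gsum n x i.castSucc + gsum n x i.succ = x i.castSucc := by
        rw [gsum_step _ _ hc, hsucc, add_assoc, fin2_add_self, add_zero]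
      rw [Finset.sum_pair hne, Finset.sum_singleton, fin2_val_add, hfin,
        Nat.mod_eq_of_lt (x i.castSucc).isLt]
    · refine hterm _ _ fun x => ?_
      have hne : Fin.last (n+1) ≠ (0 : Fin (n+2)) := by
        intro h
        have := congrArg Fin.val h
        simp [Fin.last] at this
      have hfin : gsum n x (Fin.last (n+1)) + gsum n x 0
          = ∑ i ∈ ({Fin.last (n+1)}ᶜ : Finset (Fin (n+2))), x i := by
        rw [gsum_last, gsum_zero]
        have htot : ∑ j ∈ ({Fin.last (n+1)} : Finset (Fin (n+2))), x j
            + ∑ j ∈ ({Fin.last (n+1)}ᶜ : Finset (Fin (n+2))), x j = ∑ j, x j :=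
          Finset.sum_add_sum_compl _ _
        rw [Finset.sum_singleton] at htot
        rw [← htot, ← add_assoc, fin2_add_self, zero_add]
      rw [Finset.sum_pair hne, fin2_val_add, hfin, sum_val_parity]
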